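/- Let r = [1, r_2, ..., r_n] be a 1-regular continued fraction with r_i = ±1 and n ≥ 2. Then r > 0, and moreover r > 1 if and only if r_2 = 1. -/

import Mathlib

/-- Evaluation of a finite continued fraction `[a₁, a₂, …, aₙ] = a₁ + 1/(a₂ + 1/(⋯ + 1/aₙ))`. -/
def cf : List ℤ → ℚ
  | [] => 0
  | a :: l => a + (cf l)⁻¹

/-- A continued fraction `[a₁, …, aₙ]` is 1-regular: all entries are nonzero,
`a_{n-1} aₙ > 0`, and there are no two consecutive sign changes. -/
def OneRegular (l : List ℤ) : Prop :=
  (∀ a ∈ l, a ≠ 0) ∧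
  (2 ≤ l.length → 0 < l[l.length - 2]! * l[l.length - 1]!) ∧
  (∀ i, i + 2 < l.length → l[i]! * l[i + 1]! < 0 → 0 < l[i + 1]! * l[i + 2]!)

lemma oneRegular_tail (a : ℤ) (t : List ℤ) (h : OneRegular (a :: t)) :
    OneRegular t := by
  obtain ⟨h1, h2, h3⟩ := h
  refine ⟨fun x hx => h1 x (List.mem_cons_of_mem _ hx), ?_, ?_⟩
  · intro hlen
    obtain ⟨n, hn⟩ : ∃ n, t.length = n + 2 := ⟨t.length - 2, by omega⟩
    have := h2 (by simp; omega)
    simp only [List.length_cons, hn] at this ⊢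
    simpa using this
  · intro i hi hc
    have := h3 (i + 1) (by simp; omega)
    simp only [List.getElem!_cons_succ] at this
    exact this hc

lemma cf_main (l : List ℤ) (hne : l ≠ [])
    (hpm : ∀ e ∈ l, e = 1 ∨ e = -1) (hreg : OneRegular l) :
    0 < cf l * (l[0]! : ℚ) ∧
      (2 ≤ l.length →
        (l[1]! = l[0]! → 1 < cf l * (l[0]! : ℚ)) ∧
        (l[1]! ≠ l[0]! → cf l * (l[0]! : ℚ) < 1)) := by
  induction l with
  | nil => exact absurd rfl hne
  | cons a t ih =>
    have ha : a = 1 ∨ a = -1 := hpm a List.mem_cons_self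
    match t with
    | [] =>
      constructor
      · rcases ha with rfl | rfl <;> norm_num [cf]
      · intro h; simp at h
    | b :: t' =>
      have htreg : OneRegular (b :: t') := oneRegular_tail a _ hreg
      have hb : b = 1 ∨ b = -1 := hpm b (by simp)
      have IH := ih (by simp) (fun e he => hpm e (List.mem_cons_of_mem _ he)) htreg
      simp only [List.getElem!_cons_zero, List.getElem!_cons_succ] at IH ⊢
      push_cast at IH ⊢
      have hx0 : 0 < cf (b :: t') * (b : ℚ) := IH.1
      have hcf : cf (a :: b :: t') = a + (cf (b :: t'))⁻¹ := rfl
      set x : ℚ := cf (b :: t') with hxdef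
      have hbinv : ((b : ℚ))⁻¹ = b := by rcases hb with rfl | rfl <;> norm_num
      by_cases hab : b = a
      · -- same sign: cf l * a = 1 + 1/(x*a) with x*a > 0
        subst hab
        have key : cf (b :: b :: t') * (b : ℚ) = 1 + (x * b)⁻¹ := by
          rw [hcf, mul_inv, hbinv]
          rcases hb with rfl | rfl <;> push_cast <;> ring
        have hinv : 0 < (x * (b : ℚ))⁻¹ := inv_pos.mpr hx0
        have h1 : 1 < cf (b :: b :: t') * (b : ℚ) := by rw [key]; linarith
        exact ⟨by linarith, fun _ => ⟨fun _ => h1, fun hne' => absurd rfl hne'⟩⟩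
      · -- opposite sign: b = -a
        have hba : b = -a := by
          rcases ha with rfl | rfl <;> rcases hb with rfl | rfl <;> simp_all
        -- t' must be nonempty
        match t' with
        | [] =>
          exfalso
          have := hreg.2.1 (by simp)
          simp [hba] at this
          rcases ha with rfl | rfl <;> omega
        | c :: t'' =>
          -- regularity at index 0 forces c = b
          have hc : c = 1 ∨ c = -1 := hpm c (by simp)
          have hcb : c = b := by
            have := hreg.2.2 0 (by simp)
            simp only [List.getElem!_cons_zero, List.getElem!_cons_succ] at this
            have hmul : a * b < 0 := by
              rcases ha with rfl | rfl <;> simp [hba]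
            have := this hmul
            rcases hb with rfl | rfl <;> rcases hc with rfl | rfl <;> omega
          have hgt1 : 1 < x * (b : ℚ) := (IH.2 (by simp)).1 (by rw [hcb]; simp)
          have key : cf (a :: b :: c :: t'') * (a : ℚ) = 1 - (x * b)⁻¹ := by
            rw [hcf, mul_inv, hbinv, hba]
            rcases ha with rfl | rfl <;> push_cast <;> ring
          have hxb0 : (0 : ℚ) < x * b := by linarith
          have hinv0 : 0 < (x * (b : ℚ))⁻¹ := inv_pos.mpr hxb0
          have hinv1 : (x * (b : ℚ))⁻¹ < 1 := by
            rw [inv_lt_one_iff₀]; right; exact hgt1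
          have hlt1 : cf (a :: b :: c :: t'') * (a : ℚ) < 1 := by
            rw [key]; linarith
          have hpos : 0 < cf (a :: b :: c :: t'') * (a : ℚ) := by
            rw [key]; linarith
          exact ⟨hpos, fun _ => ⟨fun hba' => absurd hba' hab, fun _ => hlt1⟩⟩

theorem one_regular_pos_and_gt_one_iff (l : List ℤ) (hn : 2 ≤ l.length)
    (h1 : l[0]! = 1) (hpm : ∀ e ∈ l, e = 1 ∨ e = -1) (hreg : OneRegular l) :
    0 < cf l ∧ (1 < cf l ↔ l[1]! = 1) := by
  have hne : l ≠ [] := by intro h; subst h; simp at hn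
  have main := cf_main l hne hpm hreg
  rw [h1] at main
  push_cast at main
  rw [mul_one] at main
  have h2 := main.2 hn
  refine ⟨main.1, ⟨?_, fun h => h2.1 h⟩⟩
  intro hgt
  by_contra hne1
  have := h2.2 hne1
  linarith
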